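/- Let 𝔐 = (V,⟨·,·⟩,A) be Jacobi–Tsankov. Then J(x)∘J(x) = 0 for every x ∈ V. -/
import Mathlib


noncomputable section

/-- The Jacobi operator `J(x) : y ↦ 𝒜(y,x)x` of a (tri)linear curvature operator `𝒜`. -/
def jacobiOp {V : Type*} [AddCommGroup V] [Module ℝ V]
    (Aop : V →ₗ[ℝ] V →ₗ[ℝ] V →ₗ[ℝ] V) (x : V) : V →ₗ[ℝ] V where
  toFun y := Aop y x x
  map_add' y z := by simp
  map_smul' c y := by simp

/-- The polarized Jacobi operator `J(x,y) : z ↦ ½(𝒜(z,x)y + 𝒜(z,y)x)`. -/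
def jacobiPol {V : Type*} [AddCommGroup V] [Module ℝ V]
    (Aop : V →ₗ[ℝ] V →ₗ[ℝ] V →ₗ[ℝ] V) (x y : V) : V →ₗ[ℝ] V where
  toFun z := (1/2 : ℝ) • (Aop z x y + Aop z y x)
  map_add' a b := by simp [smul_add]; abel
  map_smul' c a := by simp [smul_add, smul_comm c]

/-- If `𝔐 = (V,⟨·,·⟩,A)` is Jacobi–Tsankov, then `J(x) ∘ J(x) = 0`
for every `x ∈ V`. -/
theorem jacobiTsankov_jacobi_sq_zero
    {V : Type*} [AddCommGroup V] [Module ℝ V] [FiniteDimensional ℝ V]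
    -- a nondegenerate symmetric bilinear form ⟨·,·⟩ on V
    (B : LinearMap.BilinForm ℝ V)
    (hBsymm : ∀ x y : V, B x y = B y x)
    (hBnd : ∀ x : V, (∀ y : V, B x y = 0) → x = 0)
    -- the curvature operator 𝒜, with `A x y z w = ⟨𝒜(x,y)z, w⟩`
    (Aop : V →ₗ[ℝ] V →ₗ[ℝ] V →ₗ[ℝ] V)
    -- A(x,y,z,w) = -A(y,x,z,w)
    (hA1 : ∀ x y z w : V, B (Aop x y z) w = - B (Aop y x z) w)
    -- A(x,y,z,w) = A(z,w,x,y)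
    (hA2 : ∀ x y z w : V, B (Aop x y z) w = B (Aop z w x) y)
    -- first Bianchi identity
    (hA3 : ∀ x y z w : V, B (Aop x y z) w + B (Aop y z x) w + B (Aop z x y) w = 0)
    -- 𝔐 is Jacobi–Tsankov
    (hJT : ∀ x y : V, jacobiOp Aop x ∘ₗ jacobiOp Aop y = jacobiOp Aop y ∘ₗ jacobiOp Aop x) :
    ∀ x : V, jacobiOp Aop x ∘ₗ jacobiOp Aop x = 0 := by
  have Axx : ∀ x : V, Aop x x = 0 := by
    intro x
    ext z
    simp only [LinearMap.zero_apply]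
    apply hBnd
    intro y
    have := hA1 x x z y
    linarith
  have step2 : ∀ u x : V, Aop (Aop u x x) u u = 0 := by
    intro u x
    have h := congrArg (fun f => f u) (hJT u x)
    simp only [LinearMap.comp_apply, jacobiOp] at h
    simp only [LinearMap.coe_mk, AddHom.coe_mk] at h
    rw [Axx] at h
    simpa using h
  have pol : ∀ u w : V, Aop (Aop w u u) u u = 0 := by
    intro u w
    have h1 := step2 (u + w) u
    have h2 := step2 (u - w) u
    have h3 := step2 w u
    simp only [map_add, map_sub, map_neg, LinearMap.add_apply, LinearMap.sub_apply,
      LinearMap.neg_apply, Axx, LinearMap.map_zero, LinearMap.zero_apply, map_zero,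
      zero_add, add_zero, sub_zero, zero_sub, neg_neg, neg_zero] at h1 h2
    linear_combination (norm := module) ((2:ℝ)⁻¹) • h1 - ((2:ℝ)⁻¹) • h2 - h3
  intro x
  ext w
  simp only [LinearMap.comp_apply, LinearMap.zero_apply, jacobiOp, LinearMap.coe_mk,
    AddHom.coe_mk]
  exact pol x w
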